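/- arXiv:1212.6696 — 3 statements merged into one kernel-verified Lean document; each statement's English description precedes it below -/
import Mathlib

section
/- Let f₁, f₂ ∈ ℝ[x₁,…,xₙ] be homogeneous polynomials, both hyperbolic with respect to e ∈ ℝⁿ, and let h ∈ ℝ[x₁,…,xₙ] be homogeneous of degree deg(f₂) − 1. Then f₁·h interlaces f₁·f₂ with respect to e if and only if h interlaces f₂ with respect to e. -/
open Filter Topology

/-- The restriction of a multivariate polynomial to the line `t ↦ t•e + a`,
as a univariate polynomial in `t`. -/
noncomputable def lineRestrict {n : ℕ} (f : MvPolynomial (Fin n) ℝ) (e a : Fin n → ℝ) :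
    Polynomial ℝ :=
  MvPolynomial.aeval (fun i => Polynomial.C (a i) + Polynomial.C (e i) * Polynomial.X) f

/-- A univariate real polynomial has only real zeros: every complex root is real. -/
def RealRooted (p : Polynomial ℝ) : Prop :=
  ∀ z : ℂ, Polynomial.aeval z p = 0 → z.im = 0

/-- `f` is hyperbolic with respect to `e`: `f(e) ≠ 0` and for every `a`,
all roots of `t ↦ f(t•e + a)` are real. -/
def IsHyperbolic {n : ℕ} (f : MvPolynomial (Fin n) ℝ) (e : Fin n → ℝ) : Prop :=
  MvPolynomial.eval e f ≠ 0 ∧ ∀ a : Fin n → ℝ, RealRooted (lineRestrict f e a)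

/-- The roots of a univariate real polynomial, sorted increasingly (with multiplicity). -/
noncomputable def sortedRoots (p : Polynomial ℝ) : List ℝ :=
  p.roots.sort (· ≤ ·)

/-- `q` interlaces `p` (univariate): both have only real roots, `deg q = deg p − 1`,
and with roots `α₁ ≤ … ≤ α_d` of `p`, `β₁ ≤ … ≤ β_{d-1}` of `q`,
one has `α_i ≤ β_i ≤ α_{i+1}`. -/
def InterlacesU (q p : Polynomial ℝ) : Prop :=
  RealRooted p ∧ RealRooted q ∧ q.natDegree + 1 = p.natDegree ∧
    ∀ i : ℕ, i + 1 < (sortedRoots p).length →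
      (sortedRoots p).getD i 0 ≤ (sortedRoots q).getD i 0 ∧
        (sortedRoots q).getD i 0 ≤ (sortedRoots p).getD (i + 1) 0

/-- `q` strictly interlaces `p` (univariate): all interlacing inequalities are strict. -/
def StrictInterlacesU (q p : Polynomial ℝ) : Prop :=
  RealRooted p ∧ RealRooted q ∧ q.natDegree + 1 = p.natDegree ∧
    ∀ i : ℕ, i + 1 < (sortedRoots p).length →
      (sortedRoots p).getD i 0 < (sortedRoots q).getD i 0 ∧
        (sortedRoots q).getD i 0 < (sortedRoots p).getD (i + 1) 0

/-- `g` interlaces `f` with respect to `e`: `g(t•e+a)` interlaces `f(t•e+a)` for every `a`. -/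
def Interlaces {n : ℕ} (g f : MvPolynomial (Fin n) ℝ) (e : Fin n → ℝ) : Prop :=
  ∀ a : Fin n → ℝ, InterlacesU (lineRestrict g e a) (lineRestrict f e a)

/-- `g` strictly interlaces `f` with respect to `e`: `g(t•e+a)` strictly interlaces
`f(t•e+a)` for all `a` in a nonempty Zariski-open subset of `ℝⁿ`. -/
def StrictInterlaces {n : ℕ} (g f : MvPolynomial (Fin n) ℝ) (e : Fin n → ℝ) : Prop :=
  ∃ p : MvPolynomial (Fin n) ℝ, p ≠ 0 ∧ ∀ a : Fin n → ℝ, MvPolynomial.eval a p ≠ 0 →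
    StrictInterlacesU (lineRestrict g e a) (lineRestrict f e a)

/-- The hyperbolicity cone `C(f,e)`: the connected component of `e` in `ℝⁿ \ V_ℝ(f)`. -/
def hypCone {n : ℕ} (f : MvPolynomial (Fin n) ℝ) (e : Fin n → ℝ) : Set (Fin n → ℝ) :=
  connectedComponentIn {x | MvPolynomial.eval x f ≠ 0} e

/-- The directional derivative `D_e f = Σᵢ eᵢ ∂f/∂xᵢ`. -/
noncomputable def Dd {n : ℕ} (e : Fin n → ℝ) (f : MvPolynomial (Fin n) ℝ) :
    MvPolynomial (Fin n) ℝ :=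
  ∑ i, MvPolynomial.C (e i) * MvPolynomial.pderiv i f

/-- `Int(f,e)`: homogeneous polynomials of degree `d−1` interlacing `f` (of degree `d`)
with respect to `e` and positive at `e`. -/
def IntCone {n : ℕ} (f : MvPolynomial (Fin n) ℝ) (e : Fin n → ℝ) (d : ℕ) :
    Set (MvPolynomial (Fin n) ℝ) :=
  {g | g.IsHomogeneous (d - 1) ∧ Interlaces g f e ∧ 0 < MvPolynomial.eval e g}

/-- The Wronskian polynomial `Δ_{e,a} f = D_e f · D_a f − f · D_e D_a f`. -/
noncomputable def Wron {n : ℕ} (e a : Fin n → ℝ) (f : MvPolynomial (Fin n) ℝ) :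
    MvPolynomial (Fin n) ℝ :=
  Dd e f * Dd a f - f * Dd e (Dd a f)

/-- A polynomial is a sum of squares of polynomials. -/
def IsSOS {n : ℕ} (p : MvPolynomial (Fin n) ℝ) : Prop :=
  ∃ (k : ℕ) (g : Fin k → MvPolynomial (Fin n) ℝ), p = ∑ i, (g i) ^ 2

/-- The matrix pencil `M(x) = x₁M₁ + … + xₙMₙ` as a matrix of polynomials. -/
noncomputable def pencil {n d : ℕ} (M : Fin n → Matrix (Fin d) (Fin d) ℝ) :
    Matrix (Fin d) (Fin d) (MvPolynomial (Fin n) ℝ) :=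
  Matrix.of fun i j => ∑ k, MvPolynomial.C (M k i j) * MvPolynomial.X k

/-- `Δ_{ij} f = (∂f/∂xᵢ)(∂f/∂xⱼ) − f·(∂²f/∂xᵢ∂xⱼ)`. -/
noncomputable def Dij {n : ℕ} (i j : Fin n) (f : MvPolynomial (Fin n) ℝ) :
    MvPolynomial (Fin n) ℝ :=
  MvPolynomial.pderiv i f * MvPolynomial.pderiv j f -
    f * MvPolynomial.pderiv i (MvPolynomial.pderiv j f)

/-- `f` is stable: `f(μ) ≠ 0` whenever every coordinate of `μ` has positive imaginary part. -/
def IsStable {n : ℕ} (f : MvPolynomial (Fin n) ℝ) : Prop :=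
  ∀ μ : Fin n → ℂ, (∀ i, 0 < (μ i).im) → MvPolynomial.aeval μ f ≠ 0
lemma realRooted_ne_zero {p : Polynomial ℝ} (hp : RealRooted p) : p ≠ 0 := by
  intro h
  have := hp Complex.I (by simp [h])
  simp [Complex.I_im] at this

lemma realRooted_left {p q : Polynomial ℝ} (h : RealRooted (p * q)) : RealRooted p :=
  fun z hz => h z (by rw [map_mul, hz, zero_mul])

lemma realRooted_right {p q : Polynomial ℝ} (h : RealRooted (p * q)) : RealRooted q :=
  fun z hz => h z (by rw [map_mul, hz, mul_zero])

lemma realRooted_mul {p q : Polynomial ℝ} (hp : RealRooted p) (hq : RealRooted q) :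
    RealRooted (p * q) := by
  intro z hz
  rw [map_mul, mul_eq_zero] at hz
  rcases hz with h | h
  exacts [hp z h, hq z h]

lemma realRooted_splits (p : Polynomial ℝ) (hp : RealRooted p) : p.Splits := by
  generalize hd : p.natDegree = d
  induction d using Nat.strong_induction_on generalizing p with
  | _ d ih =>
  by_cases h1 : p.natDegree ≤ 1
  · exact Polynomial.Splits.of_natDegree_le_one h1
  push_neg at h1
  have hp0 : p ≠ 0 := realRooted_ne_zero hp
  have hdegpos : 0 < (p.map (algebraMap ℝ ℂ)).degree := by
    rw [Polynomial.degree_map_eq_of_injective (algebraMap ℝ ℂ).injective]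
    exact Polynomial.natDegree_pos_iff_degree_pos.mp (by omega)
  obtain ⟨z, hz⟩ := Complex.exists_root hdegpos
  have hzeval : Polynomial.aeval z p = 0 := by
    rw [Polynomial.aeval_def, ← Polynomial.eval_map]; exact hz
  have him : z.im = 0 := hp z hzeval
  have hzx : ((z.re : ℝ) : ℂ) = z := Complex.ext (by simp) (by simp [him])
  have hx : p.IsRoot z.re := by
    have h2 : Polynomial.aeval ((z.re : ℝ) : ℂ) p = 0 := by rw [hzx]; exact hzeval
    rw [show ((z.re : ℝ) : ℂ) = Complex.ofRealAm z.re from rfl,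
      Polynomial.aeval_algHom_apply] at h2
    have h3 := Complex.ofReal_eq_zero.mp h2
    simpa using h3
  obtain ⟨q, hq⟩ := Polynomial.dvd_iff_isRoot.mpr hx
  have hq0 : q ≠ 0 := fun h => hp0 (by rw [hq, h, mul_zero])
  have hqrr : RealRooted q := fun w hw => hp w (by rw [hq, map_mul, hw, mul_zero])
  have hdq : q.natDegree < d := by
    have hnd := Polynomial.natDegree_mul (Polynomial.X_sub_C_ne_zero z.re) hq0
    rw [← hq, Polynomial.natDegree_X_sub_C] at hnd
    omega
  have hsq := ih q.natDegree hdq q hqrr rfl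
  rw [hq]
  exact (Polynomial.Splits.X_sub_C _).mul hsq

lemma length_sortedRoots_of_realRooted {s : Polynomial ℝ} (hs : RealRooted s) :
    (sortedRoots s).length = s.natDegree := by
  rw [sortedRoots, Multiset.length_sort]
  exact Polynomial.splits_iff_card_roots.mp (realRooted_splits s hs)

noncomputable def cnt (L : List ℝ) (t : ℝ) : ℕ := L.countP (fun x => decide (x ≤ t))

lemma cnt_le_length (L : List ℝ) (t : ℝ) : cnt L t ≤ L.length :=
  List.countP_le_length

lemma cnt_sortedRoots_mul {p q : Polynomial ℝ} (hp : p ≠ 0) (hq : q ≠ 0) (t : ℝ) :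
    cnt (sortedRoots (p * q)) t = cnt (sortedRoots p) t + cnt (sortedRoots q) t := by
  have key : ∀ s : Multiset ℝ,
      (s.sort (· ≤ ·)).countP (fun x => decide (x ≤ t)) = s.countP (· ≤ t) := by
    intro s
    rw [← Multiset.coe_countP, Multiset.sort_eq]
  unfold cnt sortedRoots
  rw [key, key, key, Polynomial.roots_mul (mul_ne_zero hp hq), Multiset.countP_add]

lemma cnt_ge_of_getD {L : List ℝ} (hL : L.Pairwise (· ≤ ·)) {i : ℕ} (hi : i < L.length)
    {t : ℝ} (ht : L.getD i 0 ≤ t) : i + 1 ≤ cnt L t := by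
  have h1 : cnt L t = cnt (L.take (i + 1)) t + cnt (L.drop (i + 1)) t := by
    unfold cnt
    rw [← List.countP_append, List.take_append_drop]
  have h2 : cnt (L.take (i + 1)) t = (L.take (i + 1)).length := by
    unfold cnt
    rw [List.countP_eq_length]
    intro a ha
    obtain ⟨j, hj, rfl⟩ := List.mem_iff_getElem.mp ha
    have hjlen : j < L.length := lt_of_lt_of_le hj (by simp [List.length_take])
    have hji : j ≤ i := by
      have : j < min (i + 1) L.length := by simpa [List.length_take] using hj
      omega
    have hmono : L.get ⟨j, hjlen⟩ ≤ L.get ⟨i, hi⟩ :=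
      hL.rel_get_of_le (by exact hji)
    simp only [List.getElem_take]
    rw [List.getD_eq_getElem _ _ hi] at ht
    simp only [decide_eq_true_eq]
    exact le_trans hmono ht
  have h3 : (L.take (i + 1)).length = i + 1 := by
    simp [List.length_take]; omega
  omega

lemma getD_le_of_cnt {L : List ℝ} (hL : L.Pairwise (· ≤ ·)) {i : ℕ} {t : ℝ}
    (h : i + 1 ≤ cnt L t) : i < L.length ∧ L.getD i 0 ≤ t := by
  have hlen : i < L.length := lt_of_lt_of_le h (cnt_le_length L t)
  refine ⟨hlen, ?_⟩
  by_contra hlt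
  push_neg at hlt
  have h1 : cnt L t = cnt (L.take i) t + cnt (L.drop i) t := by
    unfold cnt
    rw [← List.countP_append, List.take_append_drop]
  have h2 : cnt (L.drop i) t = 0 := by
    unfold cnt
    rw [List.countP_eq_zero]
    intro a ha
    obtain ⟨j, hj, rfl⟩ := List.mem_iff_getElem.mp ha
    have hjlen : i + j < L.length := by
      have := hj; simp [List.length_drop] at this; omega
    have hmono : L.get ⟨i, hlen⟩ ≤ L.get ⟨i + j, hjlen⟩ :=
      hL.rel_get_of_le (Fin.mk_le_mk.mpr (Nat.le_add_right i j))
    rw [List.getD_eq_getElem _ _ hlen] at hlt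
    simp only [List.getElem_drop]
    simp only [decide_eq_true_eq, not_le]
    exact lt_of_lt_of_le hlt hmono
  have h3 : cnt (L.take i) t ≤ i :=
    le_trans (cnt_le_length _ _) (by simp [List.length_take])
  omega

lemma count_of_index {L K : List ℝ} (hL : L.Pairwise (· ≤ ·)) (hK : K.Pairwise (· ≤ ·))
    (hlen : L.length = K.length + 1)
    (hidx : ∀ i, i + 1 < L.length →
      L.getD i 0 ≤ K.getD i 0 ∧ K.getD i 0 ≤ L.getD (i + 1) 0)
    (t : ℝ) : cnt K t ≤ cnt L t ∧ cnt L t ≤ cnt K t + 1 := by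
  have hcK := cnt_le_length K t
  have hcL := cnt_le_length L t
  constructor
  · rcases Nat.eq_zero_or_pos (cnt K t) with h | h
    · omega
    · obtain ⟨hj, hKj⟩ := getD_le_of_cnt hK (show (cnt K t - 1) + 1 ≤ cnt K t by omega)
      have hidx' := hidx (cnt K t - 1) (by omega)
      have := cnt_ge_of_getD hL (show cnt K t - 1 < L.length by omega)
        (le_trans hidx'.1 hKj)
      omega
  · rcases le_or_gt (cnt L t) (cnt K t + 1) with h | h
    · exact h
    · exfalso
      have hm2 : 2 ≤ cnt L t := by omega
      obtain ⟨hm, hLm⟩ := getD_le_of_cnt hL (show (cnt L t - 1) + 1 ≤ cnt L t by omega)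
      have hidx' := hidx (cnt L t - 2) (by omega)
      have hKle : K.getD (cnt L t - 2) 0 ≤ t := by
        refine le_trans hidx'.2 ?_
        rw [show cnt L t - 2 + 1 = cnt L t - 1 by omega]
        exact hLm
      have := cnt_ge_of_getD hK (show cnt L t - 2 < K.length by omega) hKle
      omega

lemma index_of_count {L K : List ℝ} (hL : L.Pairwise (· ≤ ·)) (hK : K.Pairwise (· ≤ ·))
    (hlen : L.length = K.length + 1)
    (hcnt : ∀ t, cnt K t ≤ cnt L t ∧ cnt L t ≤ cnt K t + 1) :
    ∀ i, i + 1 < L.length →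
      L.getD i 0 ≤ K.getD i 0 ∧ K.getD i 0 ≤ L.getD (i + 1) 0 := by
  intro i hi
  have hiK : i < K.length := by omega
  constructor
  · have h1 : i + 1 ≤ cnt K (K.getD i 0) := cnt_ge_of_getD hK hiK le_rfl
    have h2 := (hcnt (K.getD i 0)).1
    exact (getD_le_of_cnt hL (le_trans h1 h2)).2
  · have h1 : (i + 1) + 1 ≤ cnt L (L.getD (i + 1) 0) :=
      cnt_ge_of_getD hL (by omega) le_rfl
    have h2 := (hcnt (L.getD (i + 1) 0)).2
    exact (getD_le_of_cnt hK (by omega)).2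

lemma sorted_sortedRoots (p : Polynomial ℝ) : (sortedRoots p).Pairwise (· ≤ ·) :=
  Multiset.pairwise_sort _ _

lemma interlacesU_mul_left {p q r : Polynomial ℝ} (hp : RealRooted p) :
    InterlacesU (p * q) (p * r) ↔ InterlacesU q r := by
  have hp0 : p ≠ 0 := realRooted_ne_zero hp
  constructor
  · rintro ⟨hpr, hpq, hdeg, hidx⟩
    have hr : RealRooted r := realRooted_right hpr
    have hq : RealRooted q := realRooted_right hpq
    have hr0 : r ≠ 0 := realRooted_ne_zero hr
    have hq0 : q ≠ 0 := realRooted_ne_zero hq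
    have hdeg' : q.natDegree + 1 = r.natDegree := by
      rw [Polynomial.natDegree_mul hp0 hq0, Polynomial.natDegree_mul hp0 hr0] at hdeg
      omega
    refine ⟨hr, hq, hdeg', ?_⟩
    have hlenL : (sortedRoots r).length = r.natDegree := length_sortedRoots_of_realRooted hr
    have hlenK : (sortedRoots q).length = q.natDegree := length_sortedRoots_of_realRooted hq
    have hlenPL : (sortedRoots (p * r)).length = (sortedRoots (p * q)).length + 1 := by
      rw [length_sortedRoots_of_realRooted hpr, length_sortedRoots_of_realRooted hpq,
        Polynomial.natDegree_mul hp0 hq0, Polynomial.natDegree_mul hp0 hr0]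
      omega
    refine index_of_count (sorted_sortedRoots r) (sorted_sortedRoots q) (by omega) ?_
    intro t
    have := count_of_index (sorted_sortedRoots (p * r)) (sorted_sortedRoots (p * q))
      hlenPL hidx t
    rw [cnt_sortedRoots_mul hp0 hr0, cnt_sortedRoots_mul hp0 hq0] at this
    omega
  · rintro ⟨hr, hq, hdeg, hidx⟩
    have hr0 : r ≠ 0 := realRooted_ne_zero hr
    have hq0 : q ≠ 0 := realRooted_ne_zero hq
    have hpr : RealRooted (p * r) := realRooted_mul hp hr
    have hpq : RealRooted (p * q) := realRooted_mul hp hq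
    have hdeg' : (p * q).natDegree + 1 = (p * r).natDegree := by
      rw [Polynomial.natDegree_mul hp0 hq0, Polynomial.natDegree_mul hp0 hr0]
      omega
    refine ⟨hpr, hpq, hdeg', ?_⟩
    have hlenL : (sortedRoots r).length = (sortedRoots q).length + 1 := by
      rw [length_sortedRoots_of_realRooted hr, length_sortedRoots_of_realRooted hq]
      omega
    have hlenPL : (sortedRoots (p * r)).length = (sortedRoots (p * q)).length + 1 := by
      rw [length_sortedRoots_of_realRooted hpr, length_sortedRoots_of_realRooted hpq,
        Polynomial.natDegree_mul hp0 hq0, Polynomial.natDegree_mul hp0 hr0]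
      omega
    refine index_of_count (sorted_sortedRoots (p * r)) (sorted_sortedRoots (p * q)) hlenPL ?_
    intro t
    have := count_of_index (sorted_sortedRoots r) (sorted_sortedRoots q) hlenL hidx t
    rw [cnt_sortedRoots_mul hp0 hr0, cnt_sortedRoots_mul hp0 hq0]
    omega

/-- Lemma 2.3(b): `f₁·h` interlaces `f₁·f₂` iff `h` interlaces `f₂`. -/
theorem interlaces_mul_left_iff {n d₁ d₂ : ℕ} (f₁ f₂ h : MvPolynomial (Fin n) ℝ)
    (e : Fin n → ℝ) (hf₁ : f₁.IsHomogeneous d₁) (hf₂ : f₂.IsHomogeneous d₂)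
    (hyp₁ : IsHyperbolic f₁ e) (hyp₂ : IsHyperbolic f₂ e)
    (hh : h.IsHomogeneous (d₂ - 1)) :
    Interlaces (f₁ * h) (f₁ * f₂) e ↔ Interlaces h f₂ e := by
  have hmul : ∀ (f g : MvPolynomial (Fin n) ℝ) (a : Fin n → ℝ),
      lineRestrict (f * g) e a = lineRestrict f e a * lineRestrict g e a :=
    fun f g a => map_mul (MvPolynomial.aeval _) f g
  constructor
  · intro H a
    have hH := H a
    rw [hmul, hmul] at hH
    exact (interlacesU_mul_left (hyp₁.2 a)).mp hH
  · intro H a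
    rw [hmul, hmul]
    exact (interlacesU_mul_left (hyp₁.2 a)).mpr (H a)
end

section
/- Let f ∈ ℝ[x₁,…,xₙ] be homogeneous of degree d, square-free, hyperbolic with respect to e ∈ ℝⁿ, with f(e) > 0. Then { a ∈ ℝⁿ : Δ_{e,a} f is a sum of squares of polynomials in ℝ[x₁,…,xₙ] } ⊆ closure(C(f,e)). -/
open Filter Topology

open Polynomial in
lemma lineRestrict_eval {n : ℕ} (f : MvPolynomial (Fin n) ℝ) (v c : Fin n → ℝ) (t : ℝ) :
    (lineRestrict f v c).eval t = MvPolynomial.eval (fun i => c i + t * v i) f := by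
  have h := MvPolynomial.comp_aeval_apply
    (f := fun i : Fin n => Polynomial.C (c i) + Polynomial.C (v i) * Polynomial.X)
    (Polynomial.aeval t) f
  rw [lineRestrict, ← Polynomial.coe_aeval_eq_eval, h]
  simp only [map_add, map_mul, Polynomial.aeval_C, Polynomial.aeval_X,
    Algebra.algebraMap_self_apply]
  have h2 : (MvPolynomial.aeval (R := ℝ) fun i => c i + v i * t) f
      = MvPolynomial.eval (fun i => c i + v i * t) f := by
    rw [MvPolynomial.aeval_def, MvPolynomial.eval, MvPolynomial.coe_eval₂Hom,
      Algebra.algebraMap_self]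
  rw [h2]
  simp [mul_comm]

lemma Dd_C {n : ℕ} (v : Fin n → ℝ) (r : ℝ) : Dd v (MvPolynomial.C r) = 0 := by
  simp [Dd]

lemma Dd_add {n : ℕ} (v : Fin n → ℝ) (f g : MvPolynomial (Fin n) ℝ) :
    Dd v (f + g) = Dd v f + Dd v g := by
  simp [Dd, map_add, mul_add, Finset.sum_add_distrib]
lemma pderiv_pderiv_comm {n : ℕ} (i j : Fin n) (f : MvPolynomial (Fin n) ℝ) :
    MvPolynomial.pderiv i (MvPolynomial.pderiv j f)
      = MvPolynomial.pderiv j (MvPolynomial.pderiv i f) := by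
  induction f using MvPolynomial.induction_on with
  | C r => simp
  | add p q hp hq => simp [map_add, hp, hq]
  | mul_X p k hp =>
      simp only [MvPolynomial.pderiv_mul, map_add, hp, MvPolynomial.pderiv_X]
      rcases eq_or_ne k i with rfl | hki <;> rcases eq_or_ne k j with rfl | hkj <;>
        simp_all [Pi.single_apply]

lemma Dd_mul {n : ℕ} (v : Fin n → ℝ) (f g : MvPolynomial (Fin n) ℝ) :
    Dd v (f * g) = Dd v f * g + f * Dd v g := by
  simp only [Dd, MvPolynomial.pderiv_mul, mul_add, Finset.sum_add_distrib,
    Finset.sum_mul, Finset.mul_sum]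
  congr 1
  · exact Finset.sum_congr rfl fun i _ => by ring
  · exact Finset.sum_congr rfl fun i _ => by ring

lemma Dd_comm {n : ℕ} (v w : Fin n → ℝ) (f : MvPolynomial (Fin n) ℝ) :
    Dd v (Dd w f) = Dd w (Dd v f) := by
  simp only [Dd, Finset.mul_sum, map_sum, MvPolynomial.pderiv_C_mul]
  rw [Finset.sum_comm]
  refine Finset.sum_congr rfl fun j _ => Finset.sum_congr rfl fun i _ => ?_
  rw [pderiv_pderiv_comm]; ring

lemma Dd_X {n : ℕ} (v : Fin n → ℝ) (k : Fin n) :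
    Dd v (MvPolynomial.X k) = MvPolynomial.C (v k) := by
  simp [Dd, MvPolynomial.pderiv_X, Pi.single_apply]
lemma lineRestrict_C {n : ℕ} (v c : Fin n → ℝ) (r : ℝ) :
    lineRestrict (MvPolynomial.C r) v c = Polynomial.C r := by
  simp [lineRestrict]

lemma lineRestrict_add {n : ℕ} (f g : MvPolynomial (Fin n) ℝ) (v c : Fin n → ℝ) :
    lineRestrict (f + g) v c = lineRestrict f v c + lineRestrict g v c := by
  simp [lineRestrict]

lemma lineRestrict_mul {n : ℕ} (f g : MvPolynomial (Fin n) ℝ) (v c : Fin n → ℝ) :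
    lineRestrict (f * g) v c = lineRestrict f v c * lineRestrict g v c := by
  simp [lineRestrict]

lemma derivative_lineRestrict {n : ℕ} (f : MvPolynomial (Fin n) ℝ) (v c : Fin n → ℝ) :
    (lineRestrict f v c).derivative = lineRestrict (Dd v f) v c := by
  induction f using MvPolynomial.induction_on with
  | C r => simp [lineRestrict_C, Dd_C, lineRestrict]
  | add p q hp hq => simp [lineRestrict_add, Dd_add, hp, hq]
  | mul_X p k hp =>
      rw [lineRestrict_mul, Polynomial.derivative_mul, hp, Dd_mul, Dd_X,
        lineRestrict_add, lineRestrict_mul, lineRestrict_mul, lineRestrict_C]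
      have hX : lineRestrict (MvPolynomial.X k) v c
          = Polynomial.C (c k) + Polynomial.C (v k) * Polynomial.X := by
        simp [lineRestrict]
      rw [hX]
      simp only [Polynomial.derivative_add, Polynomial.derivative_C,
        Polynomial.derivative_C_mul, Polynomial.derivative_X, mul_one, zero_add]
open Polynomial in
lemma coeff_prod_top {ι : Type*} (s : Finset ι) (q : ι → Polynomial ℝ) (m : ι → ℕ)
    (h : ∀ i ∈ s, (q i).natDegree ≤ m i) :
    (∏ i ∈ s, q i).coeff (∑ i ∈ s, m i) = ∏ i ∈ s, (q i).coeff (m i) := by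
  classical
  induction s using Finset.induction_on with
  | empty => simp
  | insert x s hx ih =>
      rw [Finset.prod_insert hx, Finset.sum_insert hx, Finset.prod_insert hx,
        Polynomial.coeff_mul_add_eq_of_natDegree_le (h x (Finset.mem_insert_self x s))
          (le_trans (natDegree_prod_le _ _) (Finset.sum_le_sum fun i hi =>
            h i (Finset.mem_insert_of_mem hi))),
        ih fun i hi => h i (Finset.mem_insert_of_mem hi)]

lemma homog_support_degree {n d : ℕ} {f : MvPolynomial (Fin n) ℝ}
    (hf : f.IsHomogeneous d) {m : Fin n →₀ ℕ} (hm : m ∈ f.support) :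
    ∑ i ∈ m.support, m i = d := by
  have := hf (MvPolynomial.mem_support_iff.mp hm)
  simpa [Finsupp.weight_apply, Finsupp.sum] using this

open Polynomial in
lemma lineRestrict_natDegree_le {n d : ℕ} {f : MvPolynomial (Fin n) ℝ}
    (hf : f.IsHomogeneous d) (e a : Fin n → ℝ) :
    (lineRestrict f e a).natDegree ≤ d := by
  classical
  rw [lineRestrict, MvPolynomial.aeval_def, MvPolynomial.eval₂_eq]
  refine le_trans (Polynomial.natDegree_sum_le _ _) ?_
  rw [Finset.fold_max_le]
  refine ⟨Nat.zero_le d, fun m hm => ?_⟩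
  rw [← homog_support_degree hf hm]
  refine le_trans natDegree_mul_le ?_
  have h1 : (algebraMap ℝ (Polynomial ℝ) (MvPolynomial.coeff m f)).natDegree = 0 := by
    simp [Polynomial.algebraMap_eq]
  rw [h1, zero_add]
  refine le_trans (natDegree_prod_le _ _) (Finset.sum_le_sum fun i _ => ?_)
  refine le_trans (natDegree_pow_le) ?_
  have : (Polynomial.C (a i) + Polynomial.C (e i) * Polynomial.X).natDegree ≤ 1 := by
    compute_degree
  calc m i * (Polynomial.C (a i) + Polynomial.C (e i) * Polynomial.X).natDegree
      ≤ m i * 1 := Nat.mul_le_mul_left _ this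
    _ = m i := mul_one _

open Polynomial in
lemma lineRestrict_coeff_d {n d : ℕ} {f : MvPolynomial (Fin n) ℝ}
    (hf : f.IsHomogeneous d) (e a : Fin n → ℝ) :
    (lineRestrict f e a).coeff d = MvPolynomial.eval e f := by
  classical
  rw [lineRestrict, MvPolynomial.aeval_def, MvPolynomial.eval₂_eq, MvPolynomial.eval_eq]
  rw [Polynomial.finset_sum_coeff]
  refine Finset.sum_congr rfl fun m hm => ?_
  rw [Polynomial.algebraMap_eq, Polynomial.coeff_C_mul]
  congr 1
  rw [← homog_support_degree hf hm]
  have key : ∀ i ∈ m.support,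
      ((Polynomial.C (a i) + Polynomial.C (e i) * Polynomial.X) ^ m i).natDegree ≤ m i := by
    intro i _
    refine le_trans natDegree_pow_le ?_
    have : (Polynomial.C (a i) + Polynomial.C (e i) * Polynomial.X).natDegree ≤ 1 := by
      compute_degree
    calc m i * (Polynomial.C (a i) + Polynomial.C (e i) * Polynomial.X).natDegree
        ≤ m i * 1 := Nat.mul_le_mul_left _ this
      _ = m i := mul_one _
  rw [coeff_prod_top _ _ _ key]
  refine Finset.prod_congr rfl fun i _ => ?_
  have hd1 : (Polynomial.C (a i) + Polynomial.C (e i) * Polynomial.X).natDegree ≤ 1 := by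
    compute_degree
  have := Polynomial.coeff_pow_of_natDegree_le (m := m i) hd1
  rw [mul_one] at this
  rw [this]
  simp
open Polynomial in
lemma realrooted_factor {p : Polynomial ℝ} {d : ℕ} (hrr : RealRooted p)
    (hdeg : p.natDegree = d) (hp0 : p ≠ 0) :
    ∃ R : Multiset ℝ, Multiset.card R = d ∧
      p = Polynomial.C p.leadingCoeff * (R.map fun r => Polynomial.X - Polynomial.C r).prod := by
  classical
  set ι := algebraMap ℝ ℂ
  have hsp : Splits (p.map ι) := IsAlgClosed.splits _
  have hfac : p.map ι = C (ι p.leadingCoeff) * ((p.map ι).roots.map fun a => X - C a).prod :=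
    hsp.eq_prod_roots.trans (by rw [Polynomial.leadingCoeff_map_of_injective ι.injective])
  set pc := p.map ι with hpc
  have hpc0 : pc ≠ 0 := (Polynomial.map_ne_zero_iff ι.injective).mpr hp0
  have him : ∀ z ∈ pc.roots, ((z.re : ℂ)) = z := by
    intro z hz
    have hz0 : Polynomial.eval z pc = 0 := (Polynomial.mem_roots hpc0).mp hz
    have : Polynomial.aeval z p = 0 := by
      rwa [Polynomial.aeval_def, ← Polynomial.eval_map]
    have him0 := hrr z this
    exact Complex.ext rfl him0.symm
  refine ⟨pc.roots.map Complex.re, ?_, ?_⟩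
  · rw [Multiset.card_map]
    have hcard := (Polynomial.splits_iff_card_roots (f := pc)).mp hsp
    rw [hcard, hpc, Polynomial.natDegree_map_eq_of_injective ι.injective, hdeg]
  · apply Polynomial.map_injective ι ι.injective
    conv_lhs => rw [show Polynomial.map ι p = pc from rfl, hfac]
    rw [Polynomial.map_mul, Polynomial.map_C]
    congr 1
    rw [Polynomial.map_multiset_prod, Multiset.map_map, Multiset.map_map]
    refine congrArg (Multiset.prod (M := Polynomial ℂ)) (Multiset.map_congr rfl fun z hz => ?_).symm
    simp only [Function.comp_apply, Polynomial.map_sub, Polynomial.map_X, Polynomial.map_C]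
    rw [show ι z.re = (z.re : ℂ) from rfl, him z hz]
lemma eval_smul_homog {n d : ℕ} {f : MvPolynomial (Fin n) ℝ} (hf : f.IsHomogeneous d)
    (s : ℝ) (x : Fin n → ℝ) :
    MvPolynomial.eval (fun i => s * x i) f = s ^ d * MvPolynomial.eval x f := by
  rw [MvPolynomial.eval_eq, MvPolynomial.eval_eq, Finset.mul_sum]
  refine Finset.sum_congr rfl fun m hm => ?_
  have hdeg := homog_support_degree hf hm
  rw [show (∏ i ∈ m.support, (s * x i) ^ m i)
      = (∏ i ∈ m.support, s ^ m i) * ∏ i ∈ m.support, x i ^ m i by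
    rw [← Finset.prod_mul_distrib]; exact Finset.prod_congr rfl fun i _ => mul_pow _ _ _,
    Finset.prod_pow_eq_pow_sum, hdeg]
  ring

open Polynomial in
lemma eval_prod_X_sub_C (R : Multiset ℝ) (x : ℝ) :
    Polynomial.eval x (R.map fun r => Polynomial.X - Polynomial.C r).prod
      = (R.map fun r => x - r).prod := by
  rw [Polynomial.eval_multiset_prod, Multiset.map_map]
  simp

lemma prod_pos_of_forall {R : Multiset ℝ} (h : ∀ r ∈ R, (0:ℝ) < r) : 0 < R.prod := by
  induction R using Multiset.induction_on with
  | empty => simp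
  | cons a R ih =>
      rw [Multiset.prod_cons]
      exact mul_pos (h a (Multiset.mem_cons_self a R))
        (ih fun r hr => h r (Multiset.mem_cons_of_mem hr))

open Polynomial in
lemma deriv_prod_eval_nonneg (R : Multiset ℝ) (x : ℝ)
    (h : ∀ r ∈ R, r < x) :
    0 ≤ Polynomial.eval x (Polynomial.derivative (R.map fun r => Polynomial.X - Polynomial.C r).prod) := by
  induction R using Multiset.induction_on with
  | empty => simp
  | cons a R ih =>
      rw [Multiset.map_cons, Multiset.prod_cons, Polynomial.derivative_mul]
      simp only [Polynomial.derivative_sub, Polynomial.derivative_X, Polynomial.derivative_C,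
        sub_zero, one_mul, Polynomial.eval_add, Polynomial.eval_mul, Polynomial.eval_sub,
        Polynomial.eval_X, Polynomial.eval_C]
      have h1 : 0 < (R.map fun r => x - r).prod :=
        prod_pos_of_forall fun y hy => by
          obtain ⟨r, hr, rfl⟩ := Multiset.mem_map.mp hy
          exact sub_pos.mpr (h r (Multiset.mem_cons_of_mem hr))
      have h2 := ih fun r hr => h r (Multiset.mem_cons_of_mem hr)
      have h3 : (0:ℝ) ≤ x - a := le_of_lt (sub_pos.mpr (h a (Multiset.mem_cons_self a R)))
      rw [eval_prod_X_sub_C]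
      positivity

open Polynomial in
lemma deriv_prod_eval_lower (R : Multiset ℝ) (x τ : ℝ) (hτ : τ ∈ R)
    (h : ∀ r ∈ R, r < x) :
    (Multiset.map (fun r => x - r) (R.erase τ)).prod
      ≤ Polynomial.eval x (Polynomial.derivative (R.map fun r => Polynomial.X - Polynomial.C r).prod) := by
  classical
  nth_rw 2 [← Multiset.cons_erase hτ]
  rw [Multiset.map_cons, Multiset.prod_cons, Polynomial.derivative_mul]
  simp only [Polynomial.derivative_sub, Polynomial.derivative_X, Polynomial.derivative_C,
    sub_zero, one_mul, Polynomial.eval_add, Polynomial.eval_mul, Polynomial.eval_sub,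
    Polynomial.eval_X, Polynomial.eval_C]
  rw [eval_prod_X_sub_C]
  have h2 := deriv_prod_eval_nonneg (R.erase τ) x
    (fun r hr => h r (Multiset.mem_of_mem_erase hr))
  have h3 : (0:ℝ) ≤ x - τ := le_of_lt (sub_pos.mpr (h τ hτ))
  nlinarith

lemma multiset_exists_max {R : Multiset ℝ} (h : R ≠ 0) :
    ∃ τ ∈ R, ∀ r ∈ R, r ≤ τ := by
  induction R using Multiset.induction_on with
  | empty => exact absurd rfl h
  | cons a R ih =>
      rcases eq_or_ne R 0 with rfl | hR
      · exact ⟨a, Multiset.mem_cons_self a 0, by simp⟩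
      · obtain ⟨τ, hτ, hmax⟩ := ih hR
        rcases le_total a τ with hle | hle
        · exact ⟨τ, Multiset.mem_cons_of_mem hτ, fun r hr => by
            rcases Multiset.mem_cons.mp hr with rfl | hr
            exacts [hle, hmax r hr]⟩
        · exact ⟨a, Multiset.mem_cons_self a R, fun r hr => by
            rcases Multiset.mem_cons.mp hr with rfl | hr
            exacts [le_refl r, le_trans (hmax r hr) hle]⟩
open Polynomial in
lemma line_factor_exists {n d : ℕ} {f : MvPolynomial (Fin n) ℝ} (hf : f.IsHomogeneous d)
    (e a : Fin n → ℝ) (hrr : RealRooted (lineRestrict f e a))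
    (hfe : MvPolynomial.eval e f ≠ 0) :
    ∃ R : Multiset ℝ, Multiset.card R = d ∧
      lineRestrict f e a = Polynomial.C (MvPolynomial.eval e f) *
        (R.map fun r => Polynomial.X - Polynomial.C r).prod := by
  set p := lineRestrict f e a with hp
  have hcoeff : p.coeff d = MvPolynomial.eval e f := lineRestrict_coeff_d hf e a
  have hp0 : p ≠ 0 := fun h => hfe (by rw [← hcoeff, h, Polynomial.coeff_zero])
  have hdeg : p.natDegree = d :=
    le_antisymm (lineRestrict_natDegree_le hf e a)
      (Polynomial.le_natDegree_of_ne_zero (hcoeff ▸ hfe))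
  have hlc : p.leadingCoeff = MvPolynomial.eval e f := by
    rw [Polynomial.leadingCoeff, hdeg, hcoeff]
  obtain ⟨R, hcard, hfac⟩ := realrooted_factor hrr hdeg hp0
  exact ⟨R, hcard, by rw [hfac, hlc]⟩

open Polynomial in
lemma line_eval_factor {n d : ℕ} {f : MvPolynomial (Fin n) ℝ} (hf : f.IsHomogeneous d)
    (e a : Fin n → ℝ) {R : Multiset ℝ} (hcard : Multiset.card R = d)
    (hfac : lineRestrict f e a = Polynomial.C (MvPolynomial.eval e f) *
      (R.map fun r => Polynomial.X - Polynomial.C r).prod)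
    {s : ℝ} (hs : 0 ≤ s) (t : ℝ) :
    MvPolynomial.eval (fun i => t * e i + s * a i) f
      = MvPolynomial.eval e f * (R.map fun r => t - s * r).prod := by
  rcases hs.eq_or_lt with rfl | hs
  · have h1 : (fun i => t * e i + 0 * a i) = fun i => t * e i := by funext i; ring
    rw [h1, eval_smul_homog hf]
    have h2 : (R.map fun r => t - 0 * r) = R.map fun _ => t :=
      Multiset.map_congr rfl fun r _ => by ring
    rw [h2, Multiset.map_const', Multiset.prod_replicate, hcard]
    ring
  · have hsne : s ≠ 0 := ne_of_gt hs
    have h1 : (fun i => t * e i + s * a i) = fun i => s * (a i + (t/s) * e i) := by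
      funext i; field_simp; ring
    rw [h1, eval_smul_homog hf]
    have h2 : MvPolynomial.eval (fun i => a i + (t/s) * e i) f
        = Polynomial.eval (t/s) (lineRestrict f e a) := (lineRestrict_eval f e a (t/s)).symm
    rw [h2, hfac, Polynomial.eval_mul, Polynomial.eval_C, eval_prod_X_sub_C]
    have h3 : (R.map fun r => t - s * r) = R.map fun r => s * (t/s - r) :=
      Multiset.map_congr rfl fun r _ => by field_simp
    rw [h3, Multiset.prod_map_mul, Multiset.map_const', Multiset.prod_replicate, hcard]
    ring
lemma eval_point_congr {n : ℕ} {pt pt' : Fin n → ℝ} (h : pt = pt')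
    (f : MvPolynomial (Fin n) ℝ) :
    MvPolynomial.eval pt f = MvPolynomial.eval pt' f := by rw [h]

open Polynomial in
lemma wron_roots_nonpos {n d : ℕ} {f : MvPolynomial (Fin n) ℝ} {e a : Fin n → ℝ}
    (hf : f.IsHomogeneous d) (hfe : 0 < MvPolynomial.eval e f)
    (hW : ∀ x : Fin n → ℝ, 0 ≤ MvPolynomial.eval x (Wron e a f))
    {R : Multiset ℝ} (hcard : Multiset.card R = d)
    (hfac : lineRestrict f e a = Polynomial.C (MvPolynomial.eval e f) *
      (R.map fun r => Polynomial.X - Polynomial.C r).prod) :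
    ∀ r ∈ R, r ≤ 0 := by
  classical
  by_contra hcon
  push_neg at hcon
  obtain ⟨r₀, hr₀R, hr₀⟩ := hcon
  have hRne : R ≠ 0 := fun h => by
    rw [h] at hr₀R; exact (Multiset.notMem_zero r₀) hr₀R
  obtain ⟨τ, hτR, hτmax⟩ := multiset_exists_max hRne
  have hτpos : 0 < τ := lt_of_lt_of_le hr₀ (hτmax r₀ hr₀R)
  set fe := MvPolynomial.eval e f with hfe_def
  set P : Polynomial ℝ := lineRestrict f a (fun i => τ * e i) with hP_def
  set Q : Polynomial ℝ := lineRestrict (Dd e f) a (fun i => τ * e i) with hQ_def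
  have hPval : ∀ s : ℝ, 0 ≤ s → Polynomial.eval s P
      = fe * (R.map fun r => τ - s * r).prod := by
    intro s h0
    rw [hP_def, lineRestrict_eval]
    exact line_eval_factor hf e a hcard hfac h0 τ
  have hFpos : ∀ s : ℝ, 0 ≤ s → s < 1 → 0 < Polynomial.eval s P := by
    intro s h0 h1
    rw [hPval s h0]
    refine mul_pos hfe (prod_pos_of_forall fun y hy => ?_)
    obtain ⟨r, hr, rfl⟩ := Multiset.mem_map.mp hy
    have h2 := hτmax r hr
    nlinarith
  set u : ℝ → ℝ := fun s => Polynomial.eval s Q / Polynomial.eval s P with hu_def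
  set M : ℝ := u 0 with hM_def
  set δ : ℝ := min 1 (1 / (τ * (|M| + 1))) with hδ_def
  have hδpos : 0 < δ := lt_min one_pos (by positivity)
  have hδle1 : δ ≤ 1 := min_le_left _ _
  set s₀ : ℝ := 1 - δ with hs₀_def
  have hs₀0 : 0 ≤ s₀ := by simp only [hs₀_def]; linarith
  have hs₀lt1 : s₀ < 1 := by simp only [hs₀_def]; linarith
  have hanti : AntitoneOn u (Set.Icc 0 s₀) := by
    have hPne : ∀ s ∈ Set.Icc (0:ℝ) s₀, Polynomial.eval s P ≠ 0 := fun s hs =>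
      ne_of_gt (hFpos s hs.1 (lt_of_le_of_lt hs.2 hs₀lt1))
    apply antitoneOn_of_deriv_nonpos (convex_Icc 0 s₀)
    · exact ContinuousOn.div (Q.continuous_aeval).continuousOn
        (P.continuous_aeval).continuousOn hPne
    · rw [interior_Icc]
      intro s hs
      have hP0 := hFpos s (le_of_lt hs.1) (lt_trans hs.2 hs₀lt1)
      exact ((Q.hasDerivAt s).div (P.hasDerivAt s)
        (ne_of_gt hP0)).differentiableAt.differentiableWithinAt
    · rw [interior_Icc]
      intro s hs
      have hP0 := hFpos s (le_of_lt hs.1) (lt_trans hs.2 hs₀lt1)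
      have hder := (Q.hasDerivAt s).div (P.hasDerivAt s) (ne_of_gt hP0)
      rw [show deriv u s = _ from hder.deriv]
      have hnum : Polynomial.eval s (Polynomial.derivative Q) * Polynomial.eval s P -
          Polynomial.eval s Q * Polynomial.eval s (Polynomial.derivative P) ≤ 0 := by
        have hQ' : Polynomial.derivative Q = lineRestrict (Dd a (Dd e f)) a (fun i => τ * e i) :=
          derivative_lineRestrict (Dd e f) a _
        have hP' : Polynomial.derivative P = lineRestrict (Dd a f) a (fun i => τ * e i) :=
          derivative_lineRestrict f a _
        rw [hQ', hP', hP_def, hQ_def, lineRestrict_eval, lineRestrict_eval,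
          lineRestrict_eval, lineRestrict_eval]
        have hWx := hW (fun i => τ * e i + s * a i)
        rw [Wron] at hWx
        rw [map_sub, map_mul, map_mul] at hWx
        rw [Dd_comm e a f] at hWx
        linarith
      exact div_nonpos_of_nonpos_of_nonneg hnum (sq_nonneg _)
  have hules : u s₀ ≤ M :=
    hanti (Set.left_mem_Icc.mpr hs₀0) (Set.right_mem_Icc.mpr hs₀0) hs₀0
  set R' : Multiset ℝ := R.map (fun r => s₀ * r) with hR'_def
  have hτ' : s₀ * τ ∈ R' := Multiset.mem_map_of_mem _ hτR
  have hlt : ∀ r' ∈ R', r' < τ := by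
    intro r' hr'
    obtain ⟨r, hr, rfl⟩ := Multiset.mem_map.mp hr'
    have h2 := hτmax r hr
    nlinarith
  set Pe : ℝ := ((R'.erase (s₀ * τ)).map fun r => τ - r).prod with hPe_def
  have hPe_pos : 0 < Pe := by
    refine prod_pos_of_forall fun y hy => ?_
    obtain ⟨r', hr', rfl⟩ := Multiset.mem_map.mp hy
    exact sub_pos.mpr (hlt r' (Multiset.mem_of_mem_erase hr'))
  have h2 : lineRestrict f e (fun i => s₀ * a i)
      = Polynomial.C fe * ((R'.map fun r => Polynomial.X - Polynomial.C r)).prod := by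
    apply Polynomial.funext; intro t
    have l1 : Polynomial.eval t (lineRestrict f e fun i => s₀ * a i)
        = MvPolynomial.eval (fun i => t * e i + s₀ * a i) f :=
      (lineRestrict_eval f e _ t).trans (eval_point_congr (by funext i; ring) f)
    rw [l1, line_eval_factor hf e a hcard hfac hs₀0 t, Polynomial.eval_mul, Polynomial.eval_C,
      eval_prod_X_sub_C, hR'_def, Multiset.map_map]
    rfl
  have hQval : Polynomial.eval s₀ Q
      = fe * Polynomial.eval τ (Polynomial.derivative
          ((R'.map fun r => Polynomial.X - Polynomial.C r)).prod) := by
    have e1 : Polynomial.eval s₀ Q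
        = MvPolynomial.eval (fun i => τ * e i + s₀ * a i) (Dd e f) :=
      lineRestrict_eval (Dd e f) a _ s₀
    have e2 : MvPolynomial.eval (fun i => τ * e i + s₀ * a i) (Dd e f)
        = Polynomial.eval τ (lineRestrict (Dd e f) e fun i => s₀ * a i) :=
      (eval_point_congr (by funext i; ring) (Dd e f)).trans
        (lineRestrict_eval (Dd e f) e (fun i => s₀ * a i) τ).symm
    calc Polynomial.eval s₀ Q
        = Polynomial.eval τ (lineRestrict (Dd e f) e fun i => s₀ * a i) := e1.trans e2
      _ = Polynomial.eval τ (Polynomial.derivative (lineRestrict f e fun i => s₀ * a i)) := by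
          rw [derivative_lineRestrict]
      _ = fe * Polynomial.eval τ (Polynomial.derivative
            ((R'.map fun r => Polynomial.X - Polynomial.C r)).prod) := by
          rw [h2, Polynomial.derivative_C_mul, Polynomial.eval_mul, Polynomial.eval_C]
  have hG_lb : fe * Pe ≤ Polynomial.eval s₀ Q := by
    rw [hQval]
    exact mul_le_mul_of_nonneg_left (deriv_prod_eval_lower R' τ (s₀ * τ) hτ' hlt) (le_of_lt hfe)
  have hF_eq : Polynomial.eval s₀ P = fe * ((τ - s₀ * τ) * Pe) := by
    rw [hPval s₀ hs₀0]
    congr 1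
    have hmm : (R.map fun r => τ - s₀ * r) = R'.map (fun r' => τ - r') := by
      rw [hR'_def, Multiset.map_map]
      rfl
    rw [hmm]
    conv_lhs => rw [← Multiset.cons_erase hτ']
    rw [Multiset.map_cons, Multiset.prod_cons]
  have hτδ : τ - s₀ * τ = τ * δ := by rw [hs₀_def]; ring
  have hτδpos : 0 < τ * δ := mul_pos hτpos hδpos
  have hu_lb : 1 / (τ * δ) ≤ u s₀ := by
    have hFpos' := hFpos s₀ hs₀0 hs₀lt1
    have hfene : fe ≠ 0 := ne_of_gt hfe
    have hPene : Pe ≠ 0 := ne_of_gt hPe_pos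
    have hτδne : τ * δ ≠ 0 := ne_of_gt hτδpos
    have hus : u s₀ = Polynomial.eval s₀ Q / Polynomial.eval s₀ P := rfl
    have step1 : (fe * Pe) / Polynomial.eval s₀ P ≤ u s₀ := by
      rw [hus]
      gcongr
    have step2 : (fe * Pe) / Polynomial.eval s₀ P = 1 / (τ * δ) := by
      rw [hF_eq, hτδ]
      field_simp
    linarith
  have hbnd : τ * δ ≤ 1 / (|M| + 1) := by
    have h1 : δ ≤ 1 / (τ * (|M| + 1)) := min_le_right _ _
    have h2 : τ * δ ≤ τ * (1 / (τ * (|M| + 1))) :=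
      mul_le_mul_of_nonneg_left h1 (le_of_lt hτpos)
    have h3 : τ * (1 / (τ * (|M| + 1))) = 1 / (|M| + 1) := by
      have hτne : τ ≠ 0 := ne_of_gt hτpos
      have hMne : |M| + 1 ≠ 0 := by positivity
      field_simp
    linarith
  have h5 : |M| + 1 ≤ 1 / (τ * δ) := by
    have h4 : (0:ℝ) < 1 / (|M| + 1) := by positivity
    rw [show |M| + 1 = 1 / (1 / (|M| + 1)) by field_simp]
    exact one_div_le_one_div_of_le hτδpos hbnd
  have h6 : M ≤ |M| := le_abs_self M
  linarith
/-- The sums-of-squares relaxation is an inner approximation of the closed hyperbolicity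
cone. -/
theorem sos_relaxation_subset {n d : ℕ} (f : MvPolynomial (Fin n) ℝ) (e : Fin n → ℝ)
    (hf : f.IsHomogeneous d) (hsf : Squarefree f) (hyp : IsHyperbolic f e)
    (hfe : 0 < MvPolynomial.eval e f) :
    {a : Fin n → ℝ | IsSOS (Wron e a f)} ⊆ closure (hypCone f e) := by
  intro a ha
  simp only [Set.mem_setOf_eq] at ha
  have hW : ∀ x : Fin n → ℝ, 0 ≤ MvPolynomial.eval x (Wron e a f) := by
    obtain ⟨k, g, hg⟩ := ha
    intro x
    rw [hg, map_sum]
    exact Finset.sum_nonneg fun i _ => by rw [map_pow]; exact sq_nonneg _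
  have hfene : MvPolynomial.eval e f ≠ 0 := ne_of_gt hfe
  obtain ⟨R, hcard, hfac⟩ := line_factor_exists hf e a (hyp.2 a) hfene
  have hroots : ∀ r ∈ R, r ≤ 0 := wron_roots_nonpos hf hfe hW hcard hfac
  have hsec : ∀ s t : ℝ, 0 ≤ s → 0 < t →
      MvPolynomial.eval (fun i => t * e i + s * a i) f ≠ 0 := by
    intro s t hs ht
    rw [line_eval_factor hf e a hcard hfac hs t]
    refine ne_of_gt (mul_pos hfe (prod_pos_of_forall fun y hy => ?_))
    obtain ⟨r, hr, rfl⟩ := Multiset.mem_map.mp hy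
    have := hroots r hr
    nlinarith
  have hcone : ∀ ε : ℝ, 0 < ε → a + ε • e ∈ hypCone f e := by
    intro ε hε
    set S : Set (Fin n → ℝ) := (fun q : ℝ × ℝ => fun i => q.2 * e i + q.1 * a i) ''
      (Set.Icc 0 1 ×ˢ Set.Ioi 0) with hS_def
    have hsub : S ⊆ {x | MvPolynomial.eval x f ≠ 0} := by
      rintro x ⟨⟨s, t⟩, ⟨hs, ht⟩, rfl⟩
      exact hsec s t hs.1 ht
    have hconn : IsPreconnected S := by
      refine IsPreconnected.image
        ((convex_Icc (0:ℝ) 1).prod (convex_Ioi 0)).isPreconnected _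
        (Continuous.continuousOn ?_)
      exact continuous_pi fun i =>
        (continuous_snd.mul continuous_const).add (continuous_fst.mul continuous_const)
    have heS : e ∈ S := by
      refine ⟨(0, 1), ⟨⟨le_refl (0:ℝ), zero_le_one⟩, Set.mem_Ioi.mpr zero_lt_one⟩, ?_⟩
      funext i; simp
    have haS : (a + ε • e) ∈ S := by
      refine ⟨(1, ε), ⟨⟨zero_le_one, le_refl (1:ℝ)⟩, Set.mem_Ioi.mpr hε⟩, ?_⟩
      funext i
      simp only [Pi.add_apply, Pi.smul_apply, smul_eq_mul]
      ring
    exact hconn.subset_connectedComponentIn heS hsub haS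
  have htd : Filter.Tendsto (fun k : ℕ => a + (1 / ((k:ℝ)+1)) • e) Filter.atTop (nhds a) := by
    have h0 : Filter.Tendsto (fun k : ℕ => 1 / ((k:ℝ)+1)) Filter.atTop (nhds 0) :=
      tendsto_one_div_add_atTop_nhds_zero_nat
    have hc : Continuous fun c : ℝ => a + c • e :=
      continuous_const.add (continuous_id.smul continuous_const)
    have := (hc.tendsto 0).comp h0
    simpa [Function.comp_def] using this
  exact mem_closure_of_tendsto htd
    (Filter.Eventually.of_forall fun k => hcone _ (by positivity))
end

section
/- Let M₁,…,Mₙ be real symmetric d×d matrices, M(x) = x₁M₁ + … + xₙMₙ, and f = det(M(x)) ∈ ℝ[x₁,…,xₙ]. If e, a ∈ ℝⁿ are such that M(e) and M(a) are both positive semidefinite, then Δ_{e,a} f = D_e f · D_a f − f · D_e D_a f is a sum of squares of polynomials in ℝ[x₁,…,xₙ]. -/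
open Filter Topology

section Aux

open MvPolynomial Matrix Finset

variable {n d : ℕ}

/-- The directional derivative as a derivation. -/
noncomputable def Dder (e : Fin n → ℝ) :
    Derivation ℝ (MvPolynomial (Fin n) ℝ) (MvPolynomial (Fin n) ℝ) :=
  ∑ i, e i • MvPolynomial.pderiv i

lemma Dder_apply (e : Fin n → ℝ) (f : MvPolynomial (Fin n) ℝ) :
    Dder e f = Dd e f := by
  classical
  have h : ∀ s : Finset (Fin n),
      ((∑ i ∈ s, e i • MvPolynomial.pderiv i :
        Derivation ℝ (MvPolynomial (Fin n) ℝ) (MvPolynomial (Fin n) ℝ)) f)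
        = ∑ i ∈ s, MvPolynomial.C (e i) * MvPolynomial.pderiv i f := by
    intro s
    induction s using Finset.induction_on with
    | empty => simp
    | insert _ _ hi ih =>
      rw [Finset.sum_insert hi, Derivation.add_apply, ih, Finset.sum_insert hi,
        Derivation.smul_apply, MvPolynomial.smul_eq_C_mul]
  simpa [Dder, Dd] using h Finset.univ

lemma Dder_C (e : Fin n → ℝ) (r : ℝ) : Dder e (MvPolynomial.C r) = 0 := by
  have : (MvPolynomial.C r : MvPolynomial (Fin n) ℝ)
      = algebraMap ℝ (MvPolynomial (Fin n) ℝ) r := rfl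
  rw [this, Derivation.map_algebraMap]

/-- Leibniz rule for a derivation applied to a finite product. -/
lemma Derivation.map_prod' {ι : Type*} [DecidableEq ι]
    (D : Derivation ℝ (MvPolynomial (Fin n) ℝ) (MvPolynomial (Fin n) ℝ))
    (s : Finset ι) (g : ι → MvPolynomial (Fin n) ℝ) :
    D (∏ i ∈ s, g i) = ∑ i ∈ s, (∏ j ∈ s.erase i, g j) * D (g i) := by
  classical
  induction s using Finset.induction_on with
  | empty => simp
  | @insert i s hi ih =>
    have h1 : ∀ j ∈ s, (insert i s).erase j = insert i (s.erase j) := by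
      intro j hj
      exact Finset.erase_insert_of_ne (fun h => hi (h ▸ hj))
    rw [Finset.prod_insert hi, D.leibniz, smul_eq_mul, smul_eq_mul, ih, Finset.mul_sum,
      Finset.sum_insert hi, Finset.erase_insert hi, add_comm]
    congr 1
    refine Finset.sum_congr rfl fun j hj => ?_
    rw [h1 j hj, Finset.prod_insert (fun h => hi (Finset.mem_of_mem_erase h))]
    ring

/-- Jacobi's formula for derivations: `D (det N) = tr (adj N * D N)`. -/
lemma derivation_det (D : Derivation ℝ (MvPolynomial (Fin n) ℝ) (MvPolynomial (Fin n) ℝ))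
    (N : Matrix (Fin d) (Fin d) (MvPolynomial (Fin n) ℝ)) :
    D N.det = (N.adjugate * N.map ⇑D).trace := by
  classical
  have hadj : ∀ j k : Fin d, N.adjugate j k =
      ∑ σ : Equiv.Perm (Fin d), ((Equiv.Perm.sign σ : ℤ) : MvPolynomial (Fin n) ℝ) *
        ((Pi.single k 1 : Fin d → MvPolynomial (Fin n) ℝ) (σ j) *
          ∏ i ∈ Finset.univ.erase j, N (σ i) i) := by
    intro j k
    have h1 : (N.updateCol j (Pi.single k 1)).det = N.adjugate j k := by
      rw [← Matrix.det_transpose, ← Matrix.updateRow_transpose, ← Matrix.adjugate_apply,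
        ← Matrix.adjugate_transpose, Matrix.transpose_apply]
    rw [← h1, Matrix.det_apply']
    refine Finset.sum_congr rfl fun σ _ => ?_
    congr 1
    rw [← Finset.mul_prod_erase Finset.univ _ (Finset.mem_univ j)]
    simp only [Matrix.updateCol_apply, if_pos rfl]
    congr 1
    exact Finset.prod_congr rfl fun i hi => by
      rw [if_neg (Finset.ne_of_mem_erase hi)]
  rw [Matrix.det_apply']
  rw [map_sum]
  have hterm : ∀ σ : Equiv.Perm (Fin d),
      D (((Equiv.Perm.sign σ : ℤ) : MvPolynomial (Fin n) ℝ) * ∏ i, N (σ i) i)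
        = ((Equiv.Perm.sign σ : ℤ) : MvPolynomial (Fin n) ℝ) *
            ∑ j, (∏ i ∈ Finset.univ.erase j, N (σ i) i) * D (N (σ j) j) := by
    intro σ
    rw [D.leibniz, D.map_intCast, smul_zero, add_zero, smul_eq_mul,
      Derivation.map_prod']
  rw [Finset.sum_congr rfl fun σ _ => hterm σ]
  have lhs_eq : ∑ σ : Equiv.Perm (Fin d),
      ((Equiv.Perm.sign σ : ℤ) : MvPolynomial (Fin n) ℝ) *
        ∑ j, (∏ i ∈ Finset.univ.erase j, N (σ i) i) * D (N (σ j) j)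
      = ∑ j, ∑ σ : Equiv.Perm (Fin d),
          ((Equiv.Perm.sign σ : ℤ) : MvPolynomial (Fin n) ℝ) *
            ((∏ i ∈ Finset.univ.erase j, N (σ i) i) * D (N (σ j) j)) := by
    simp_rw [Finset.mul_sum]
    exact Finset.sum_comm
  rw [lhs_eq]
  rw [Matrix.trace]
  refine Finset.sum_congr rfl fun j _ => ?_
  rw [Matrix.diag_apply, Matrix.mul_apply]
  have : ∀ k, N.adjugate j k * (N.map ⇑D) k j
      = ∑ σ : Equiv.Perm (Fin d), ((Equiv.Perm.sign σ : ℤ) : MvPolynomial (Fin n) ℝ) *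
          ((Pi.single k 1 : Fin d → MvPolynomial (Fin n) ℝ) (σ j) *
            ∏ i ∈ Finset.univ.erase j, N (σ i) i) * D (N k j) := by
    intro k
    rw [hadj j k, Matrix.map_apply, Finset.sum_mul]
  rw [Finset.sum_congr rfl fun k _ => this k, Finset.sum_comm]
  refine Finset.sum_congr rfl fun σ _ => ?_
  rw [Finset.sum_eq_single (σ j)]
  · simp [Pi.single_apply]; ring
  · intro k _ hk
    simp [Pi.single_apply, Ne.symm hk]
  · intro h; exact absurd (Finset.mem_univ _) h

/-- Product rule for entrywise derivation of a matrix product. -/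
lemma derivation_matrix_mul (D : Derivation ℝ (MvPolynomial (Fin n) ℝ) (MvPolynomial (Fin n) ℝ))
    (X Y : Matrix (Fin d) (Fin d) (MvPolynomial (Fin n) ℝ)) :
    (X * Y).map ⇑D = X.map ⇑D * Y + X * Y.map ⇑D := by
  refine Matrix.ext fun i j => ?_
  simp only [Matrix.map_apply, Matrix.mul_apply, Matrix.add_apply, map_sum,
    Derivation.leibniz, smul_eq_mul]
  rw [Finset.sum_add_distrib]
  have h : ∑ k : Fin d, Y k j * D (X i k) = ∑ k : Fin d, D (X i k) * Y k j :=
    Finset.sum_congr rfl fun k _ => mul_comm _ _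
  rw [h, add_comm]

end Aux

open Matrix MvPolynomial Finset

/-- Theorem 4.2: if `f = det M(x)` with `M(e), M(a) ⪰ 0`, then `Δ_{e,a} f` is a sum of
squares. -/
theorem wron_isSOS_of_detRep {n d : ℕ} (M : Fin n → Matrix (Fin d) (Fin d) ℝ)
    (e a : Fin n → ℝ) (hsym : ∀ k, (M k).IsSymm)
    (he : (∑ k, e k • M k).PosSemidef) (ha : (∑ k, a k • M k).PosSemidef) :
    IsSOS (Wron e a (pencil M).det) := by
  classical
  set N : Matrix (Fin d) (Fin d) (MvPolynomial (Fin n) ℝ) := pencil M with hNdef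
  set B : Matrix (Fin d) (Fin d) (MvPolynomial (Fin n) ℝ) := N.adjugate with hBdef
  set E : Matrix (Fin d) (Fin d) (MvPolynomial (Fin n) ℝ) :=
    (∑ k, e k • M k).map ⇑(MvPolynomial.C : ℝ →+* MvPolynomial (Fin n) ℝ) with hEdef
  set A : Matrix (Fin d) (Fin d) (MvPolynomial (Fin n) ℝ) :=
    (∑ k, a k • M k).map ⇑(MvPolynomial.C : ℝ →+* MvPolynomial (Fin n) ℝ) with hAdef
  -- directional derivatives of the pencil
  have hDX : ∀ (c : Fin n → ℝ) (k : Fin n),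
      Dder c (MvPolynomial.X k : MvPolynomial (Fin n) ℝ) = MvPolynomial.C (c k) := by
    intro c k
    rw [Dder_apply]
    simp [Dd, MvPolynomial.pderiv_X, Pi.single_apply, Finset.sum_ite_eq', mul_comm]
  have hmap : ∀ c : Fin n → ℝ, N.map ⇑(Dder c)
      = (∑ k, c k • M k).map ⇑(MvPolynomial.C : ℝ →+* MvPolynomial (Fin n) ℝ) := by
    intro c
    ext i j
    simp only [Matrix.map_apply, hNdef, pencil, Matrix.of_apply]
    rw [map_sum]
    have : ∀ k, Dder c (MvPolynomial.C (M k i j) * MvPolynomial.X k)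
        = MvPolynomial.C (M k i j * c k) := by
      intro k
      rw [(Dder c).leibniz, hDX, Dder_C, smul_zero, add_zero, smul_eq_mul]
      exact (map_mul (MvPolynomial.C : ℝ →+* MvPolynomial (Fin n) ℝ) _ _).symm
    rw [Finset.sum_congr rfl fun k _ => this k, ← map_sum]
    congr 1
    simp [Finset.sum_apply, Matrix.sum_apply, mul_comm]
  have hDe : Dder e N.det = (B * E).trace := by
    rw [derivation_det, hmap e, hEdef]
  have hDa : Dder a N.det = (B * A).trace := by
    rw [derivation_det, hmap a, hAdef]
  -- derivative of adjugate identity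
  have hsm1 : ∀ p : MvPolynomial (Fin n) ℝ,
      ((p • (1 : Matrix (Fin d) (Fin d) (MvPolynomial (Fin n) ℝ))).map ⇑(Dder e))
        = Dder e p • 1 := by
    intro p
    ext i j
    by_cases h : i = j <;>
      simp [Matrix.map_apply, Matrix.one_apply, h, smul_eq_mul]
  have h1 : B.map ⇑(Dder e) * N + B * E = (B * E).trace • 1 := by
    have h0 := derivation_matrix_mul (Dder e) B N
    rw [hBdef, Matrix.adjugate_mul, hsm1, ← hBdef] at h0
    rw [hmap e, ← hEdef] at h0
    rw [← hDe]
    exact h0.symm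
  have key : N.det • (B.map ⇑(Dder e)) = (B * E).trace • B - B * E * B := by
    have hNB : N * B = N.det • 1 := by rw [hBdef]; exact Matrix.mul_adjugate N
    have h2 := congrArg (· * B) h1
    simp only [Matrix.add_mul, Matrix.smul_mul, Matrix.one_mul] at h2
    rw [Matrix.mul_assoc (B.map ⇑(Dder e)) N B, hNB, Matrix.mul_smul, Matrix.mul_one] at h2
    rw [eq_sub_iff_add_eq]
    exact h2
  -- A has constant entries
  have hDeA : ∀ i j, Dder e (A i j) = 0 := by
    intro i j
    simp only [hAdef, Matrix.map_apply]
    exact Dder_C e _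
  have hDeDa : Dder e ((B * A).trace) = ((B.map ⇑(Dder e)) * A).trace := by
    simp only [Matrix.trace, Matrix.diag_apply, Matrix.mul_apply, map_sum,
      Derivation.leibniz, smul_eq_mul, Matrix.map_apply]
    refine Finset.sum_congr rfl fun i _ => Finset.sum_congr rfl fun k _ => ?_
    rw [hDeA k i, mul_zero, zero_add, mul_comm]
  have step5 : N.det * Dder e (Dder a N.det)
      = (B * E).trace * (B * A).trace - (B * E * B * A).trace := by
    rw [hDa, hDeDa]
    calc N.det * ((B.map ⇑(Dder e)) * A).trace
        = ((N.det • (B.map ⇑(Dder e))) * A).trace := by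
          rw [Matrix.smul_mul, Matrix.trace_smul, smul_eq_mul]
      _ = (((B * E).trace • B - B * E * B) * A).trace := by rw [key]
      _ = (B * E).trace * (B * A).trace - (B * E * B * A).trace := by
          rw [Matrix.sub_mul, Matrix.trace_sub, Matrix.smul_mul, Matrix.trace_smul,
            smul_eq_mul]
  have hWron : Wron e a N.det = (B * E * B * A).trace := by
    unfold Wron
    simp only [← Dder_apply]
    rw [step5, hDe, hDa]
    ring
  -- symmetry facts
  have hNsym : Nᵀ = N := by
    refine Matrix.ext fun i j => ?_
    show N j i = N i j
    rw [hNdef]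
    show ∑ k, (MvPolynomial.C (M k j i) * MvPolynomial.X k)
        = ∑ k, MvPolynomial.C (M k i j) * MvPolynomial.X k
    exact Finset.sum_congr rfl fun k _ => by
      rw [show M k j i = M k i j from congrFun (congrFun (hsym k) i) j]
  have hBsym : Bᵀ = B := by
    rw [hBdef, Matrix.adjugate_transpose, hNsym]
  -- square roots
  open scoped MatrixOrder in
  set Se : Matrix (Fin d) (Fin d) ℝ := CFC.sqrt (∑ k, e k • M k) with hSedef
  open scoped MatrixOrder in
  set Sa : Matrix (Fin d) (Fin d) ℝ := CFC.sqrt (∑ k, a k • M k) with hSadef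
  open scoped MatrixOrder in
  have hSe2 : Se * Se = ∑ k, e k • M k := CFC.sqrt_mul_sqrt_self _ he.nonneg
  open scoped MatrixOrder in
  have hSa2 : Sa * Sa = ∑ k, a k • M k := CFC.sqrt_mul_sqrt_self _ ha.nonneg
  have hSesym : Seᵀ = Se := by
    open scoped MatrixOrder in
    have := (Matrix.nonneg_iff_posSemidef.mp (CFC.sqrt_nonneg (∑ k, e k • M k))).1
    rwa [Matrix.IsHermitian, Matrix.conjTranspose_eq_transpose_of_trivial] at this
  have hSasym : Saᵀ = Sa := by
    open scoped MatrixOrder in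
    have := (Matrix.nonneg_iff_posSemidef.mp (CFC.sqrt_nonneg (∑ k, a k • M k))).1
    rwa [Matrix.IsHermitian, Matrix.conjTranspose_eq_transpose_of_trivial] at this
  set Ep : Matrix (Fin d) (Fin d) (MvPolynomial (Fin n) ℝ) :=
    Se.map ⇑(MvPolynomial.C : ℝ →+* MvPolynomial (Fin n) ℝ) with hEpdef
  set Ap : Matrix (Fin d) (Fin d) (MvPolynomial (Fin n) ℝ) :=
    Sa.map ⇑(MvPolynomial.C : ℝ →+* MvPolynomial (Fin n) ℝ) with hApdef
  have hE2 : Ep * Ep = E := by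
    rw [hEpdef, hEdef, ← hSe2, Matrix.map_mul]
  have hA2 : Ap * Ap = A := by
    rw [hApdef, hAdef, ← hSa2, Matrix.map_mul]
  have hEpsym : Epᵀ = Ep := by
    rw [hEpdef, ← Matrix.transpose_map, hSesym]
  have hApsym : Apᵀ = Ap := by
    rw [hApdef, ← Matrix.transpose_map, hSasym]
  set G : Matrix (Fin d) (Fin d) (MvPolynomial (Fin n) ℝ) := Ep * B * Ap with hGdef
  have hGT : Gᵀ = Ap * B * Ep := by
    rw [hGdef, Matrix.transpose_mul, Matrix.transpose_mul, hEpsym, hApsym, hBsym,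
      Matrix.mul_assoc]
  have htr : (B * E * B * A).trace = (Gᵀ * G).trace := by
    rw [← hE2, ← hA2]
    rw [show B * (Ep * Ep) * B * (Ap * Ap) = (B * Ep * (Ep * B * Ap)) * Ap by
      simp only [Matrix.mul_assoc]]
    rw [Matrix.trace_mul_comm, hGT, hGdef]
    simp only [Matrix.mul_assoc]
  have hsq : (Gᵀ * G).trace = ∑ j, ∑ k, (G k j) ^ 2 := by
    simp only [Matrix.trace, Matrix.diag_apply, Matrix.mul_apply, Matrix.transpose_apply, sq]
  refine ⟨d * d, fun p => G (finProdFinEquiv.symm p).1 (finProdFinEquiv.symm p).2, ?_⟩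
  rw [hWron, htr, hsq]
  rw [show (∑ p : Fin (d * d), G (finProdFinEquiv.symm p).1 (finProdFinEquiv.symm p).2 ^ 2)
      = ∑ q : Fin d × Fin d, G q.1 q.2 ^ 2 from
    Fintype.sum_equiv finProdFinEquiv.symm _ _ (fun p => rfl)]
  rw [Fintype.sum_prod_type]
  exact Finset.sum_comm
end
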